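/- arXiv:2104.14765 — 2 statements merged into one kernel-verified Lean document; each statement's English description precedes it below -/
import Mathlib

section
/- The element g̃ = 1 − φ̃^{-1} + #I is a non-zero-divisor of ℤ[G] (hence g = 1 − φ^{-1} + #I is a non-zero-divisor of ℤ[G/I]), and the element h = 1 − (ν_I/#I)·φ̃^{-1} + ν_I is a non-zero-divisor of ℚ[G]. -/
open MonoidAlgebra

/-- The sum `ν_H = Σ_{σ ∈ H} σ` of the elements of a subgroup `H` in the group algebra. -/
noncomputable def nuElt (R : Type) [CommRing R] {G : Type} [CommGroup G] [Fintype G]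
    (H : Subgroup G) : MonoidAlgebra R G :=
  letI := Classical.decPred (· ∈ H)
  ∑ σ ∈ Finset.univ.filter (· ∈ H), MonoidAlgebra.of R G σ

lemma smul_cancel' {R : Type} [CommRing R] [NoZeroDivisors R] {G : Type}
    (c : R) (hc : c ≠ 0) (y : MonoidAlgebra R G) (h : c • y = 0) : y = 0 := by
  ext a
  have : (c • y).coeff a = (0 : MonoidAlgebra R G).coeff a := by rw [h]
  rw [MonoidAlgebra.coeff_smul_apply, smul_eq_mul] at this
  simp only [MonoidAlgebra.coeff_zero, Finsupp.coe_zero, Pi.zero_apply] at this ⊢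
  simpa [hc] using this

lemma aux1' {R : Type} [CommRing R] [NoZeroDivisors R] [CharZero R] {G : Type} [CommGroup G]
    [Fintype G] (u : G) (n : ℕ) (hn : 0 < n) (y : MonoidAlgebra R G)
    (hy : (1 - MonoidAlgebra.of R G u + (n : MonoidAlgebra R G)) * y = 0) : y = 0 := by
  have key : MonoidAlgebra.of R G u * y = ((1 + n : ℕ) : MonoidAlgebra R G) * y := by
    push_cast
    linear_combination -hy
  have iter : ∀ k : ℕ, (MonoidAlgebra.of R G u) ^ k * y
      = ((1 + n : ℕ) : MonoidAlgebra R G) ^ k * y := by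
    intro k
    induction k with
    | zero => simp
    | succ k ih =>
      rw [pow_succ, pow_succ, mul_assoc, key, ← mul_assoc, mul_comm ((MonoidAlgebra.of R G u)^k),
        mul_assoc, ih]
      ring
  set m := orderOf u with hm
  have hm1 : (MonoidAlgebra.of R G u) ^ m = 1 := by
    rw [← map_pow, pow_orderOf_eq_one, map_one]
  have h2 := iter m
  rw [hm1, one_mul, ← Nat.cast_pow] at h2
  have h3 : (((1 + n) ^ m : ℕ) : MonoidAlgebra R G)
      = algebraMap R (MonoidAlgebra R G) (((1+n)^m : ℕ) : R) := by
    rw [map_natCast]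
  rw [h3, ← Algebra.smul_def] at h2
  have h4 : ((((1+n)^m : ℕ) : R) - 1) • y = 0 := by
    rw [sub_smul, one_smul, ← h2, sub_self]
  refine smul_cancel' _ ?_ _ h4
  have hm0 : 0 < m := orderOf_pos u
  have hne : (1 + n) ^ m ≠ 1 := by
    have : 1 < (1+n)^m := Nat.one_lt_pow hm0.ne' (by omega)
    omega
  intro hcon
  apply hne
  rw [sub_eq_zero] at hcon
  exact_mod_cast hcon

lemma nu_mul_of' {G : Type} [CommGroup G] [Fintype G] (H : Subgroup G) (σ : G) (hσ : σ ∈ H) :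
    nuElt ℚ H * MonoidAlgebra.of ℚ G σ = nuElt ℚ H := by
  classical
  unfold nuElt
  rw [Finset.sum_mul]
  refine Eq.symm (Finset.sum_equiv (Equiv.mulRight σ⁻¹) ?_ ?_)
  · intro τ
    simp [mul_mem_cancel_right (inv_mem hσ)]
  · intro τ hτ
    rw [← map_mul]
    simp [Equiv.coe_mulRight, inv_mul_cancel_right, mul_assoc]

lemma nu_sq' {G : Type} [CommGroup G] [Fintype G] (H : Subgroup G) :
    nuElt ℚ H * nuElt ℚ H = (Nat.card H : ℚ) • nuElt ℚ H := by
  letI := Classical.decPred (· ∈ H)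
  have hexp : nuElt ℚ H
      = ∑ σ ∈ Finset.univ.filter (· ∈ H), MonoidAlgebra.of ℚ G σ := rfl
  nth_rewrite 2 [hexp]
  rw [Finset.mul_sum]
  rw [Finset.sum_congr rfl (fun σ hσ => nu_mul_of' H σ (by simpa using hσ))]
  rw [Finset.sum_const]
  have hcard : (Finset.univ.filter (· ∈ H)).card = Nat.card H := by
    rw [Nat.card_eq_fintype_card, Fintype.card_subtype]
  rw [hcard, Nat.cast_smul_eq_nsmul]

/-- `g̃ = 1 − φ̃⁻¹ + #I` is a non-zero-divisor of `ℤ[G]` (hence its image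
`g = 1 − φ⁻¹ + #I` is a non-zero-divisor of `ℤ[G/I]`), and
`h = 1 − (ν_I/#I)·φ̃⁻¹ + ν_I` is a non-zero-divisor of `ℚ[G]`. -/
theorem statement10 {G : Type} [CommGroup G] [Fintype G] (I D : Subgroup G) (hID : I ≤ D)
    (φt : G) (hφt : φt ∈ D) (hφgen : ∀ d ∈ D, ∃ n : ℤ, φt ^ n * d⁻¹ ∈ I) :
    (1 - MonoidAlgebra.of ℤ G φt⁻¹ + (Nat.card I : MonoidAlgebra ℤ G))
      ∈ nonZeroDivisors (MonoidAlgebra ℤ G) ∧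
    (MonoidAlgebra.mapDomainRingHom ℤ (QuotientGroup.mk' I)
        (1 - MonoidAlgebra.of ℤ G φt⁻¹ + (Nat.card I : MonoidAlgebra ℤ G)))
      ∈ nonZeroDivisors (MonoidAlgebra ℤ (G ⧸ I)) ∧
    (1 - (Nat.card I : ℚ)⁻¹ • (nuElt ℚ I * MonoidAlgebra.of ℚ G φt⁻¹) + nuElt ℚ I)
      ∈ nonZeroDivisors (MonoidAlgebra ℚ G) := by
  have hn : 0 < Nat.card I := Nat.card_pos
  refine ⟨?_, ?_, ?_⟩
  · rw [mem_nonZeroDivisors_iff_right]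
    intro y hy
    exact aux1' φt⁻¹ (Nat.card I) hn y (by rw [mul_comm]; exact hy)
  · have himg : (MonoidAlgebra.mapDomainRingHom ℤ (QuotientGroup.mk' I)
        (1 - MonoidAlgebra.of ℤ G φt⁻¹ + (Nat.card I : MonoidAlgebra ℤ G)))
        = 1 - MonoidAlgebra.of ℤ (G ⧸ I) ((QuotientGroup.mk' I) φt⁻¹)
          + (Nat.card I : MonoidAlgebra ℤ (G ⧸ I)) := by
      rw [map_add, map_sub, map_one, map_natCast]
      congr 2
      simp [MonoidAlgebra.of_apply, MonoidAlgebra.mapDomainRingHom]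
    rw [himg, mem_nonZeroDivisors_iff_right]
    letI : Fintype (G ⧸ I) := Fintype.ofFinite _
    intro y hy
    exact aux1' ((QuotientGroup.mk' I) φt⁻¹) (Nat.card I) hn y (by rw [mul_comm]; exact hy)
  · rw [mem_nonZeroDivisors_iff_right]
    intro y hy
    rw [mul_comm] at hy
    set C := algebraMap ℚ (MonoidAlgebra ℚ G) with hCdef
    set ν := nuElt ℚ I with hνdef
    set f := MonoidAlgebra.of ℚ G φt⁻¹ with hfdef
    set c : ℚ := (Nat.card I : ℚ) with hcdef
    have hc : c ≠ 0 := by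
      simp only [hcdef]
      exact_mod_cast hn.ne'
    set a := C c⁻¹ with hadef
    set b := C c with hbdef
    have hab : a * b = 1 := by
      rw [hadef, hbdef, ← map_mul, inv_mul_cancel₀ hc, map_one]
    have hν : ν * ν = b * ν := by
      rw [hbdef, ← Algebra.smul_def]
      exact nu_sq' I
    have hsm : (c⁻¹ • (ν * f) : MonoidAlgebra ℚ G) = a * (ν * f) := by
      rw [hadef, Algebra.smul_def]
    rw [hsm] at hy
    -- step 1 : (1 - a*ν) is killed
    have step1 : (1 - a * ν) * y = 0 := by
      have hid : (1 - a * ν) * (1 - a * (ν * f) + ν) = 1 - a * ν := by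
        linear_combination (a * a * f - a) * hν + (a * ν * f - ν) * hab
      calc (1 - a * ν) * y = (1 - a * ν) * ((1 - a * (ν * f) + ν) * y) := by
            rw [← mul_assoc, hid]
        _ = 0 := by rw [hy, mul_zero]
    have hy2 : (a * ν) * y = y := by
      have := step1
      rw [sub_mul, one_mul, sub_eq_zero] at this
      exact this.symm
    -- step 2 : reduce to aux1'
    have hfin : (1 - f + (Nat.card I : MonoidAlgebra ℚ G)) * y = 0 := by
      have hb' : (Nat.card I : MonoidAlgebra ℚ G) = b := by
        rw [hbdef, hcdef, map_natCast]
      rw [hb']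
      linear_combination hy + (f - b) * hy2 + (ν * y) * hab
    exact aux1' φt⁻¹ (Nat.card I) hn y hfin
end

section
/- For every 1 ≤ i ≤ s−1 one has the inclusion of ideals of ℤ[G]: (𝓘_I + (#I)) · J_{i+1} ⊆ J_i. -/
open MonoidAlgebra Finset

/-- `I = I_1 × ⋯ × I_s` where `I_l` is the (possibly trivial) cyclic subgroup generated
by `σ l`: every element of `I` is, in a unique way, the product of elements of the
subgroups `⟨σ l⟩`. -/
def IsDecomp {G : Type} [CommGroup G] (I : Subgroup G) {s : ℕ} (σ : Fin s → G) : Prop :=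
  (∀ l, σ l ∈ I) ∧
    ∀ g ∈ I, ∃! x : ∀ l, Subgroup.zpowers (σ l), (∏ l, ((x l : G))) = g

/-- The ideal `Z_i` generated by the products `ν_{l_1} ⋯ ν_{l_{s-i}}` over all
`(s-i)`-element subsets `{l_1 < ⋯ < l_{s-i}}` of `{1, …, s}`. -/
noncomputable def Zideal {G : Type} [CommGroup G] [Fintype G] {s : ℕ} (σ : Fin s → G)
    (i : ℕ) : Ideal (MonoidAlgebra ℤ G) :=
  Ideal.span {x | ∃ T : Finset (Fin s), T.card = s - i ∧
    x = ∏ l ∈ T, nuElt ℤ (Subgroup.zpowers (σ l))}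

/-- The ideal `𝓘_H = ker(ℤ[G] → ℤ[G/H])`. -/
noncomputable def kerIdeal {G : Type} [CommGroup G] [Fintype G] (H : Subgroup G) :
    Ideal (MonoidAlgebra ℤ G) :=
  RingHom.ker (MonoidAlgebra.mapDomainRingHom ℤ (QuotientGroup.mk' H))

/-- The ideal `J_i = Σ_{j=0}^{s-i} Z_{i+j} 𝓘_I^j` (for `1 ≤ i ≤ s`). -/
noncomputable def Jideal {G : Type} [CommGroup G] [Fintype G] (I : Subgroup G)
    {s : ℕ} (σ : Fin s → G) (i : ℕ) : Ideal (MonoidAlgebra ℤ G) :=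
  ∑ j ∈ Finset.range (s - i + 1), Zideal σ (i + j) * (kerIdeal I) ^ j


lemma nu_mem_ker {G : Type} [CommGroup G] [Fintype G] (I : Subgroup G) (H : Subgroup G)
    (hH : H ≤ I) :
    (Nat.card H : MonoidAlgebra ℤ G) - nuElt ℤ H ∈ kerIdeal I := by
  classical
  rw [kerIdeal, RingHom.mem_ker, map_sub, map_natCast, sub_eq_zero]
  rw [nuElt]
  rw [map_sum]
  have h1 : ∀ g ∈ Finset.univ.filter (· ∈ H),
      (mapDomainRingHom ℤ (QuotientGroup.mk' I)) (MonoidAlgebra.of ℤ G g) = 1 := by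
    intro g hg
    simp only [Finset.mem_filter] at hg
    have : (QuotientGroup.mk' I) g = 1 := (QuotientGroup.eq_one_iff g).mpr (hH hg.2)
    show MonoidAlgebra.mapDomain (QuotientGroup.mk' I) (MonoidAlgebra.single g 1)
        = (1 : MonoidAlgebra ℤ (G ⧸ I))
    rw [MonoidAlgebra.mapDomain_single, this, MonoidAlgebra.one_def]
  rw [Finset.sum_congr rfl h1, Finset.sum_const]
  have hcard : (Finset.univ.filter (· ∈ H)).card = Nat.card H := by
    rw [Nat.card_eq_fintype_card, Fintype.card_subtype]
  rw [hcard]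
  simp

lemma sum_ideal_le {ι R : Type} [CommRing R] (t : Finset ι) (f : ι → Ideal R)
    (X : Ideal R) (h : ∀ j ∈ t, f j ≤ X) : ∑ j ∈ t, f j ≤ X := by
  classical
  induction t using Finset.cons_induction with
  | empty => simp
  | cons a t ha ih =>
    rw [Finset.sum_cons, Submodule.add_eq_sup]
    exact sup_le (h a (Finset.mem_cons_self a t))
      (ih fun j hj => h j (Finset.mem_cons_of_mem hj))

lemma term_le_J {G : Type} [CommGroup G] [Fintype G] (I : Subgroup G)
    {s : ℕ} (σ : Fin s → G) (i j : ℕ) (hj : j ≤ s - i) :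
    Zideal σ (i + j) * kerIdeal I ^ j ≤ Jideal I σ i := by
  rw [Jideal]
  exact Finset.single_le_sum (f := fun j => Zideal σ (i + j) * kerIdeal I ^ j)
    (fun _ _ => zero_le) (Finset.mem_range.mpr (by omega))

lemma span_card_mul_Z_le {G : Type} [CommGroup G] [Fintype G] (I : Subgroup G)
    {s : ℕ} (σ : Fin s → G) (hσ : ∀ l, σ l ∈ I) (k : ℕ) (hk : k + 1 ≤ s) :
    Ideal.span {(Nat.card I : MonoidAlgebra ℤ G)} * Zideal σ (k + 1) ≤
      Zideal σ k + Zideal σ (k + 1) * kerIdeal I := by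
  classical
  rw [Zideal, Ideal.span_mul_span, Ideal.span_le]
  rintro x hx
  simp only [Set.mem_mul, Set.mem_singleton_iff, Set.mem_setOf_eq] at hx
  obtain ⟨c, hc, y, ⟨T, hT, rfl⟩, rfl⟩ := hx
  subst hc
  have hTc : (Tᶜ : Finset (Fin s)).Nonempty := by
    rw [← Finset.card_pos, Finset.card_compl, hT, Fintype.card_fin]; omega
  obtain ⟨l₀, hl₀c⟩ := hTc
  have hl₀ : l₀ ∉ T := Finset.mem_compl.mp hl₀c
  obtain ⟨m, hm⟩ := Subgroup.card_dvd_of_le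
    ((Subgroup.zpowers_le).mpr (hσ l₀) : Subgroup.zpowers (σ l₀) ≤ I)
  have key : (Nat.card I : MonoidAlgebra ℤ G) * ∏ l ∈ T, nuElt ℤ (Subgroup.zpowers (σ l)) =
      (m : MonoidAlgebra ℤ G) *
        (nuElt ℤ (Subgroup.zpowers (σ l₀)) * ∏ l ∈ T, nuElt ℤ (Subgroup.zpowers (σ l))) +
      ((m : MonoidAlgebra ℤ G) * ∏ l ∈ T, nuElt ℤ (Subgroup.zpowers (σ l))) *
        ((Nat.card (Subgroup.zpowers (σ l₀)) : MonoidAlgebra ℤ G)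
          - nuElt ℤ (Subgroup.zpowers (σ l₀))) := by
    rw [hm]; push_cast; ring
  rw [key, Submodule.add_eq_sup]
  apply Submodule.add_mem
  · apply Submodule.mem_sup_left
    apply Ideal.mul_mem_left
    apply Ideal.subset_span
    refine ⟨insert l₀ T, by rw [Finset.card_insert_of_notMem hl₀, hT]; omega, ?_⟩
    rw [Finset.prod_insert hl₀]
  · apply Submodule.mem_sup_right
    exact Ideal.mul_mem_mul
      (Ideal.mul_mem_left _ _ (Ideal.subset_span ⟨T, hT, rfl⟩))
      (nu_mem_ker I _ ((Subgroup.zpowers_le).mpr (hσ l₀)))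

/-- for `1 ≤ i ≤ s − 1` one has `(𝓘_I + (#I)) · J_{i+1} ⊆ J_i`. -/
theorem statement11 {G : Type} [CommGroup G] [Fintype G] (I : Subgroup G)
    {s : ℕ} (σ : Fin s → G) (hdec : IsDecomp I σ) (i : ℕ) (h1 : 1 ≤ i) (h2 : i ≤ s - 1) :
    (kerIdeal I ⊔ Ideal.span {(Nat.card I : MonoidAlgebra ℤ G)}) * Jideal I σ (i + 1)
      ≤ Jideal I σ i := by
  have hs : 1 ≤ s := by omega
  rw [Ideal.sup_mul]
  apply sup_le
  · rw [Jideal, Finset.mul_sum]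
    apply sum_ideal_le
    intro j hj
    rw [Finset.mem_range] at hj
    have h : kerIdeal I * (Zideal σ (i + 1 + j) * kerIdeal I ^ j)
        = Zideal σ (i + (j + 1)) * kerIdeal I ^ (j + 1) := by
      rw [show i + 1 + j = i + (j + 1) by omega, pow_succ]
      ring
    rw [h]
    exact term_le_J I σ i (j + 1) (by omega)
  · rw [Jideal, Finset.mul_sum]
    apply sum_ideal_le
    intro j hj
    rw [Finset.mem_range] at hj
    have h : Ideal.span {(Nat.card I : MonoidAlgebra ℤ G)}
          * (Zideal σ (i + 1 + j) * kerIdeal I ^ j)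
        = (Ideal.span {(Nat.card I : MonoidAlgebra ℤ G)} * Zideal σ ((i + j) + 1))
          * kerIdeal I ^ j := by
      rw [show i + 1 + j = (i + j) + 1 by omega]; ring
    rw [h]
    calc (Ideal.span {(Nat.card I : MonoidAlgebra ℤ G)} * Zideal σ ((i + j) + 1))
          * kerIdeal I ^ j
        ≤ (Zideal σ (i + j) + Zideal σ ((i + j) + 1) * kerIdeal I) * kerIdeal I ^ j :=
          Ideal.mul_mono (span_card_mul_Z_le I σ hdec.1 (i + j) (by omega)) le_rfl
      _ = Zideal σ (i + j) * kerIdeal I ^ j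
          + Zideal σ (i + (j + 1)) * kerIdeal I ^ (j + 1) := by
          rw [show (i + j) + 1 = i + (j + 1) by omega, add_mul, pow_succ]; ring
      _ ≤ Jideal I σ i := by
          rw [Submodule.add_eq_sup]
          exact sup_le (term_le_J I σ i j (by omega)) (term_le_J I σ i (j + 1) (by omega))
end
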